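/- A matrix polynomial Q(λ) ∈ F[λ]^{m×n} is a minimal basis if and only if Q(λ0) has full row rank for every λ0 in the algebraic closure of F, and the highest row degree coefficient matrix Q_h of Q(λ) has full row rank. -/

import Mathlib

set_option synthInstance.maxHeartbeats 1000000
set_option maxHeartbeats 1600000

open Polynomial Matrix

/-- The row of a polynomial matrix viewed as a vector of rational functions. -/
noncomputable def ratRow {F : Type*} [Field F] {ν : Type*} (v : ν → Polynomial F) :
    ν → RatFunc F :=
  fun j => algebraMap (Polynomial F) (RatFunc F) (v j)

/-- The rational subspace spanned by the rows of a polynomial matrix. -/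
noncomputable def rowSpan {F : Type*} [Field F] {ρ ν : Type*}
    (Q : Matrix ρ ν (Polynomial F)) : Submodule (RatFunc F) (ν → RatFunc F) :=
  Submodule.span (RatFunc F) (Set.range fun i => ratRow (Q i))

/-- Degree of a polynomial row vector: the maximum of the degrees of its entries. -/
noncomputable def rowDegree {F : Type*} [Field F] {ν : Type*} [Fintype ν]
    (v : ν → Polynomial F) : ℕ :=
  Finset.univ.sup fun j => (v j).natDegree

/-- The order of a polynomial matrix: the sum of its row degrees. -/
noncomputable def polyOrder {F : Type*} [Field F] {ρ ν : Type*} [Fintype ρ] [Fintype ν]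
    (Q : Matrix ρ ν (Polynomial F)) : ℕ :=
  ∑ i, rowDegree (Q i)

/-- `Q` is a minimal basis: its rows are linearly independent over the field of rational
functions (hence a polynomial basis of the rational subspace they span), and any other
polynomial matrix whose rows form a polynomial basis of the same subspace has order
at least the order of `Q`. -/
def IsMinimalBasis {F : Type*} [Field F] {ρ ν : Type*} [Fintype ρ] [Fintype ν]
    (Q : Matrix ρ ν (Polynomial F)) : Prop :=
  LinearIndependent (RatFunc F) (fun i => ratRow (Q i)) ∧
  ∀ (m : ℕ) (R : Matrix (Fin m) ν (Polynomial F)),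
    LinearIndependent (RatFunc F) (fun i => ratRow (R i)) →
    rowSpan R = rowSpan Q → polyOrder Q ≤ polyOrder R

section Helpers
variable {F : Type*} [Field F] {m n : ℕ}

lemma rank_eq_card_iff_li {K : Type*} [Field K] {m n : ℕ} (M : Matrix (Fin m) (Fin n) K) :
    M.rank = m ↔ LinearIndependent K (fun i => M i) := by
  rw [M.rank_eq_finrank_span_row, linearIndependent_iff_card_eq_finrank_span]
  rw [Set.finrank, Fintype.card_fin]
  exact eq_comm

lemma coeff_mul_of_natDegree_le {a q : Polynomial F} {d N : ℕ} (hq : q.natDegree ≤ d)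
    (h : a.natDegree + d ≤ N) : (a * q).coeff N = a.coeff (N - d) * q.coeff d := by
  rcases lt_or_eq_of_le hq with hlt | heq
  · rw [coeff_eq_zero_of_natDegree_lt hlt, mul_zero]
    apply coeff_eq_zero_of_natDegree_lt
    calc (a * q).natDegree ≤ a.natDegree + q.natDegree := natDegree_mul_le
      _ < N := by omega
  · rcases lt_or_eq_of_le h with h2 | h2
    · rw [coeff_eq_zero_of_natDegree_lt (show a.natDegree < N - d by omega), zero_mul]
      apply coeff_eq_zero_of_natDegree_lt
      calc (a * q).natDegree ≤ a.natDegree + q.natDegree := natDegree_mul_le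
        _ < N := by omega
    · subst heq
      obtain rfl : N = a.natDegree + q.natDegree := h2.symm
      have := coeff_mul_degree_add_degree a q
      rw [leadingCoeff, leadingCoeff] at this
      rw [this, Nat.add_sub_cancel]

/-- Coefficient of a combination row at a high degree, in terms of the
highest-row-degree coefficient matrix. -/
lemma coeff_combination {Q : Matrix (Fin m) (Fin n) (Polynomial F)}
    (a : Fin m → Polynomial F) {N : ℕ}
    (hN : ∀ k, a k ≠ 0 → (a k).natDegree + rowDegree (Q k) ≤ N) (j : Fin n) :
    (∑ k, a k * Q k j).coeff N
      = ∑ k, (a k).coeff (N - rowDegree (Q k)) * (Q k j).coeff (rowDegree (Q k)) := by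
  rw [finset_sum_coeff]
  refine Finset.sum_congr rfl fun k _ => ?_
  by_cases hak : a k = 0
  · simp [hak]
  · exact coeff_mul_of_natDegree_le
      (Finset.le_sup (f := fun j => (Q k j).natDegree) (Finset.mem_univ j)) (hN k hak)

/-- Predictable degree property (lower bound form): if the highest row degree
coefficient matrix has independent rows, then a polynomial combination of the rows
of `Q` with `i`-th coefficient nonzero has row degree at least
`deg aᵢ + rowDegree (Q i)`. -/
lemma exists_coeff_combination_ne_zero {Q : Matrix (Fin m) (Fin n) (Polynomial F)}
    (hQh : LinearIndependent F (fun k => (fun j => (Q k j).coeff (rowDegree (Q k)))))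
    (a : Fin m → Polynomial F) (i : Fin m) (hai : a i ≠ 0) :
    ∃ (j : Fin n) (N : ℕ), (∑ k, a k * Q k j).coeff N ≠ 0 ∧
      (a i).natDegree + rowDegree (Q i) ≤ N := by
  classical
  set S : Finset (Fin m) := Finset.univ.filter (fun k => a k ≠ 0) with hS
  have hiS : i ∈ S := by simp [hS, hai]
  set N : ℕ := S.sup (fun k => (a k).natDegree + rowDegree (Q k)) with hNdef
  obtain ⟨k0, hk0S, hk0⟩ := S.exists_mem_eq_sup ⟨i, hiS⟩
    (fun k => (a k).natDegree + rowDegree (Q k))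
  have hNk : ∀ k, a k ≠ 0 → (a k).natDegree + rowDegree (Q k) ≤ N := by
    intro k hk
    exact Finset.le_sup (f := fun k => (a k).natDegree + rowDegree (Q k))
      (Finset.mem_filter.mpr ⟨Finset.mem_univ k, hk⟩)
  set c : Fin m → F := fun k => (a k).coeff (N - rowDegree (Q k)) with hc
  have hak0 : a k0 ≠ 0 := by simpa [hS] using hk0S
  have hck0 : c k0 ≠ 0 := by
    have : N - rowDegree (Q k0) = (a k0).natDegree := by
      rw [← hNdef] at hk0; omega
    rw [hc]; simp only [this]
    exact fun h => hak0 (leadingCoeff_eq_zero.mp h)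
  -- there is a column where the coefficient at N is nonzero
  have hj : ∃ j, ∑ k, c k * (Q k j).coeff (rowDegree (Q k)) ≠ 0 := by
    by_contra hall
    push_neg at hall
    have hsum : ∑ k, c k • (fun j => (Q k j).coeff (rowDegree (Q k))) = 0 := by
      funext j
      simpa [Finset.sum_apply] using hall j
    exact hck0 (Fintype.linearIndependent_iff.mp hQh c hsum k0)
  obtain ⟨j, hj⟩ := hj
  have hcoeff : (∑ k, a k * Q k j).coeff N ≠ 0 := by
    rw [coeff_combination a hNk j]; exact hj
  exact ⟨j, N, hcoeff, hNk i hai⟩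

/-- Predictable degree property (lower bound form). -/
lemma rowDegree_combination_ge {Q : Matrix (Fin m) (Fin n) (Polynomial F)}
    (hQh : LinearIndependent F (fun k => (fun j => (Q k j).coeff (rowDegree (Q k)))))
    (a : Fin m → Polynomial F) (i : Fin m) (hai : a i ≠ 0) :
    (a i).natDegree + rowDegree (Q i) ≤ rowDegree (fun j => ∑ k, a k * Q k j) := by
  obtain ⟨j, N, hc, hN⟩ := exists_coeff_combination_ne_zero hQh a i hai
  refine le_trans hN (le_trans (le_natDegree_of_ne_zero hc) ?_)
  exact Finset.le_sup (f := fun j' => (∑ k, a k * Q k j').natDegree) (Finset.mem_univ j)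

lemma sum_smul_ratRow_apply (Q : Matrix (Fin m) (Fin n) (Polynomial F))
    (e : Fin m → RatFunc F) (j : Fin n) :
    (∑ k, e k • ratRow (Q k) : Fin n → RatFunc F) j
      = ∑ k, e k * algebraMap (Polynomial F) (RatFunc F) (Q k j) := by
  simp [ratRow, Finset.sum_apply]

lemma exists_common_denom (g : Fin m → RatFunc F) :
    ∃ (D : Polynomial F) (a : Fin m → Polynomial F), D ≠ 0 ∧
      (∀ k, algebraMap (Polynomial F) (RatFunc F) (a k)
          = algebraMap (Polynomial F) (RatFunc F) D * g k) ∧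
      (∀ k, g k ≠ 0 → a k ≠ 0) := by
  classical
  refine ⟨∏ l, (g l).denom, fun k => (g k).num * ∏ l ∈ Finset.univ.erase k, (g l).denom,
    Finset.prod_ne_zero_iff.mpr (fun l _ => RatFunc.denom_ne_zero _), fun k => ?_, fun k hk => ?_⟩
  · have hnum : algebraMap (Polynomial F) (RatFunc F) (g k).num
        = g k * algebraMap (Polynomial F) (RatFunc F) (g k).denom := by
      exact (div_eq_iff (RatFunc.algebraMap_ne_zero (RatFunc.denom_ne_zero _))).mp
        (RatFunc.num_div_denom (g k))
    calc algebraMap (Polynomial F) (RatFunc F)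
          ((g k).num * ∏ l ∈ Finset.univ.erase k, (g l).denom)
        = (g k * algebraMap (Polynomial F) (RatFunc F) (g k).denom)
            * algebraMap (Polynomial F) (RatFunc F) (∏ l ∈ Finset.univ.erase k, (g l).denom) := by
          rw [_root_.map_mul, hnum]
      _ = g k * algebraMap (Polynomial F) (RatFunc F)
            ((g k).denom * ∏ l ∈ Finset.univ.erase k, (g l).denom) := by
          rw [_root_.map_mul]; ring
      _ = algebraMap (Polynomial F) (RatFunc F) (∏ l, (g l).denom) * g k := by
          rw [Finset.mul_prod_erase Finset.univ (fun l => (g l).denom) (Finset.mem_univ k)]; ring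
  · exact mul_ne_zero (RatFunc.num_ne_zero hk)
      (Finset.prod_ne_zero_iff.mpr fun l _ => RatFunc.denom_ne_zero _)

/-- If the highest row degree coefficient matrix has independent rows, then the rows of
`Q` are linearly independent over the rational functions. -/
lemma li_ratRow_of_Qh {Q : Matrix (Fin m) (Fin n) (Polynomial F)}
    (hQh : LinearIndependent F (fun k => (fun j => (Q k j).coeff (rowDegree (Q k))))) :
    LinearIndependent (RatFunc F) (fun i => ratRow (Q i)) := by
  rw [Fintype.linearIndependent_iff]
  intro g hg
  by_contra hne
  push_neg at hne
  obtain ⟨i, hi⟩ := hne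
  obtain ⟨D, a, hD, hDa, ha⟩ := exists_common_denom g
  have hai : a i ≠ 0 := ha i hi
  have hzero : ∀ j, ∑ k, a k * Q k j = 0 := by
    intro j
    apply RatFunc.algebraMap_injective F
    rw [map_sum, map_zero]
    calc ∑ k, algebraMap (Polynomial F) (RatFunc F) (a k * Q k j)
        = algebraMap (Polynomial F) (RatFunc F) D
            * ∑ k, g k * algebraMap (Polynomial F) (RatFunc F) (Q k j) := by
          rw [Finset.mul_sum]
          refine Finset.sum_congr rfl fun k _ => ?_
          rw [_root_.map_mul, hDa k]; ring
      _ = 0 := by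
          rw [← sum_smul_ratRow_apply Q g j, hg]
          simp
  obtain ⟨j, N, hc, -⟩ := exists_coeff_combination_ne_zero hQh a i hai
  rw [hzero j] at hc
  simp at hc

/-- Master reduction lemma: if some polynomial row vector `r` with
`rowDegree r < rowDegree (Q i)` is a rational combination of the rows of `Q` in which
row `i` appears with a nonzero coefficient, then `Q` is not order-minimal. -/
lemma order_reduction {Q : Matrix (Fin m) (Fin n) (Polynomial F)}
    (hQli : LinearIndependent (RatFunc F) (fun i => ratRow (Q i)))
    (hopt : ∀ (m' : ℕ) (R : Matrix (Fin m') (Fin n) (Polynomial F)),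
      LinearIndependent (RatFunc F) (fun i => ratRow (R i)) →
      rowSpan R = rowSpan Q → polyOrder Q ≤ polyOrder R)
    (i : Fin m) (r : Fin n → Polynomial F) (e : Fin m → RatFunc F) (hei : e i ≠ 0)
    (hr : ratRow r = ∑ k, e k • ratRow (Q k))
    (hdeg : rowDegree r < rowDegree (Q i)) : False := by
  classical
  set R : Matrix (Fin m) (Fin n) (Polynomial F) := Q.updateRow i r with hRdef
  have hrow_ne : ∀ k, k ≠ i → R k = Q k := fun k hk => Q.updateRow_ne hk
  have hrow_i : R i = r := Q.updateRow_self
  have hsub1 : rowSpan R ≤ rowSpan Q := by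
    rw [rowSpan, Submodule.span_le]
    rintro _ ⟨k, rfl⟩
    by_cases hk : k = i
    · show ratRow (R k) ∈ rowSpan Q
      rw [hk, hrow_i, hr]
      exact Submodule.sum_mem _ fun l _ =>
        Submodule.smul_mem _ _ (Submodule.subset_span ⟨l, rfl⟩)
    · show ratRow (R k) ∈ rowSpan Q
      rw [hrow_ne k hk]
      exact Submodule.subset_span ⟨k, rfl⟩
  have hQi_mem : ratRow (Q i) ∈ rowSpan R := by
    have hsplit : e i • ratRow (Q i)
        = ratRow r - ∑ k ∈ Finset.univ.erase i, e k • ratRow (Q k) := by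
      rw [hr, ← Finset.add_sum_erase Finset.univ (fun k => e k • ratRow (Q k))
        (Finset.mem_univ i)]
      abel
    have h1 : ratRow r ∈ rowSpan R := by
      rw [← hrow_i]; exact Submodule.subset_span ⟨i, rfl⟩
    have h2 : ∑ k ∈ Finset.univ.erase i, e k • ratRow (Q k) ∈ rowSpan R := by
      refine Submodule.sum_mem _ fun k hk => ?_
      rw [← hrow_ne k (Finset.ne_of_mem_erase hk)]
      exact Submodule.smul_mem _ _ (Submodule.subset_span ⟨k, rfl⟩)
    have h3 : e i • ratRow (Q i) ∈ rowSpan R := hsplit ▸ Submodule.sub_mem _ h1 h2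
    have h4 := Submodule.smul_mem _ (e i)⁻¹ h3
    rwa [inv_smul_smul₀ hei] at h4
  have hspan : rowSpan R = rowSpan Q := by
    refine le_antisymm hsub1 (Submodule.span_le.mpr ?_)
    rintro _ ⟨k, rfl⟩
    show ratRow (Q k) ∈ rowSpan R
    by_cases hk : k = i
    · rw [hk]; exact hQi_mem
    · rw [← hrow_ne k hk]
      exact Submodule.subset_span ⟨k, rfl⟩
  have hfR : LinearIndependent (RatFunc F) (fun k => ratRow (R k)) := by
    rw [linearIndependent_iff_card_eq_finrank_span]
    have h1 : Fintype.card (Fin m) = Module.finrank (RatFunc F) (rowSpan Q) :=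
      linearIndependent_iff_card_eq_finrank_span.mp hQli
    show Fintype.card (Fin m) = Module.finrank (RatFunc F) (rowSpan R)
    rw [hspan]; exact h1
  have horder : polyOrder R < polyOrder Q := by
    show (∑ k, rowDegree (R k)) < ∑ k, rowDegree (Q k)
    refine Finset.sum_lt_sum (fun k _ => ?_) ⟨i, Finset.mem_univ i, ?_⟩
    · by_cases hk : k = i
      · subst hk; rw [hrow_i]; exact le_of_lt hdeg
      · rw [hrow_ne k hk]
    · rw [hrow_i]; exact hdeg
  exact absurd (hopt m R hfR hspan) (not_le.mpr horder)

/-- If the rows of an `m × n` matrix over a field are linearly independent, some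
`m × m` minor is nonzero. -/
lemma exists_submatrix_det_ne_zero {K : Type*} [Field K] {m n : ℕ}
    {M : Matrix (Fin m) (Fin n) K} (h : LinearIndependent K (fun i => M i)) :
    ∃ g : Fin m → Fin n, (M.submatrix id g).det ≠ 0 := by
  classical
  have hrank : M.rank = m := (rank_eq_card_iff_li M).mpr h
  have hspan : Submodule.span K (Set.range Mᵀ) = ⊤ := by
    apply Submodule.eq_top_of_finrank_eq
    rw [show Set.range Mᵀ = Set.range M.col from rfl, ← Matrix.rank_eq_finrank_span_cols, hrank,
      Module.finrank_fin_fun]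
  obtain ⟨t, hts, htspan, htli⟩ := exists_linearIndependent K (Set.range Mᵀ)
  have htfin : t.Finite := Set.Finite.subset (Set.finite_range Mᵀ) hts
  haveI := htfin.fintype
  have hcard : Fintype.card t = m := by
    have h1 := finrank_span_set_eq_card htli
    rw [htspan, hspan, finrank_top, Module.finrank_fin_fun, Set.toFinset_card] at h1
    exact h1.symm
  set e : Fin m ≃ t := (Fintype.equivFinOfCardEq hcard).symm with he
  have hsel : ∀ k : Fin m, ∃ j : Fin n, Mᵀ j = (e k : Fin m → K) := fun k => hts (e k).2
  choose g hg using hsel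
  refine ⟨g, fun hdet => ?_⟩
  obtain ⟨v, hv, hmul⟩ := Matrix.exists_mulVec_eq_zero_iff.mpr hdet
  have hli2 : LinearIndependent K ((Subtype.val : t → (Fin m → K)) ∘ e) :=
    htli.comp e e.injective
  have hsum : ∑ k, v k • ((Subtype.val : t → (Fin m → K)) ∘ e) k = 0 := by
    funext i
    have := congrFun hmul i
    simp only [Matrix.mulVec, dotProduct, Pi.zero_apply] at this
    simp only [Finset.sum_apply, Pi.smul_apply, Function.comp_apply, smul_eq_mul, Pi.zero_apply]
    rw [← this]
    refine Finset.sum_congr rfl fun k _ => ?_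
    have := congrFun (hg k) i
    simp only [Matrix.transpose_apply] at this
    rw [← this]
    simp [Matrix.submatrix, mul_comm]
  have := Fintype.linearIndependent_iff.mp hli2 v hsum
  exact hv (funext this)

/-- If `Q(x)` has full row rank for every `x` in the algebraic closure, then any
polynomial vector in the rational row span of `Q` is a *polynomial* combination of
the rows of `Q`. -/
lemma mem_rowSpan_poly {Q : Matrix (Fin m) (Fin n) (Polynomial F)}
    (hrk : ∀ x : AlgebraicClosure F, (Q.map fun p => Polynomial.aeval x p).rank = m)
    (v : Fin n → Polynomial F) (hv : ratRow v ∈ rowSpan Q) :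
    ∃ b : Fin m → Polynomial F, ∀ j, v j = ∑ k, b k * Q k j := by
  classical
  obtain ⟨g, hg⟩ := (Submodule.mem_span_range_iff_exists_fun (RatFunc F)).mp hv
  obtain ⟨D, a, hD, hDa, -⟩ := exists_common_denom g
  have hpoly : ∀ j, D * v j = ∑ k, a k * Q k j := by
    intro j
    apply RatFunc.algebraMap_injective F
    rw [map_sum, _root_.map_mul]
    have h1 : algebraMap (Polynomial F) (RatFunc F) (v j)
        = ∑ k, g k * algebraMap (Polynomial F) (RatFunc F) (Q k j) := by
      rw [← sum_smul_ratRow_apply Q g j, hg]; rfl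
    rw [h1, Finset.mul_sum]
    refine Finset.sum_congr rfl fun k _ => ?_
    rw [_root_.map_mul, hDa k]; ring
  clear hg hDa hv
  have hconst : ∀ (D : Polynomial F) (a : Fin m → Polynomial F), D ≠ 0 → D.natDegree = 0 →
      (∀ j, D * v j = ∑ k, a k * Q k j) →
      ∃ b : Fin m → Polynomial F, ∀ j, v j = ∑ k, b k * Q k j := by
    intro D a hD0 hdeg hid
    obtain ⟨c, rfl⟩ : ∃ c, D = C c := ⟨D.coeff 0, Polynomial.eq_C_of_natDegree_eq_zero hdeg⟩
    have hc : c ≠ 0 := fun h => hD0 (by rw [h, map_zero])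
    refine ⟨fun k => C c⁻¹ * a k, fun j => ?_⟩
    calc v j = C c⁻¹ * C c * v j := by rw [← C_mul, inv_mul_cancel₀ hc, C_1, one_mul]
      _ = ∑ k, C c⁻¹ * a k * Q k j := by
          rw [mul_assoc, hid j, Finset.mul_sum]
          exact Finset.sum_congr rfl fun k _ => by ring
  suffices h : ∀ (N : ℕ) (D : Polynomial F) (a : Fin m → Polynomial F), D ≠ 0 →
      D.natDegree ≤ N → (∀ j, D * v j = ∑ k, a k * Q k j) →
      ∃ b : Fin m → Polynomial F, ∀ j, v j = ∑ k, b k * Q k j by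
    exact h D.natDegree D a hD le_rfl hpoly
  intro N
  induction N with
  | zero =>
    intro D a hD0 hdeg hid
    exact hconst D a hD0 (Nat.le_zero.mp hdeg) hid
  | succ N ih =>
    intro D a hD0 hdeg hid
    by_cases h0 : D.natDegree = 0
    · exact hconst D a hD0 h0 hid
    · -- D has a root x in the algebraic closure
      have hdegmap : (D.map (algebraMap F (AlgebraicClosure F))).degree ≠ 0 := by
        rw [Polynomial.degree_map]
        rw [Polynomial.degree_eq_natDegree hD0]
        exact_mod_cast fun h => h0 (by exact_mod_cast h)
      obtain ⟨x, hx⟩ := IsAlgClosed.exists_root _ hdegmap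
      have hDx : Polynomial.aeval x D = 0 := by
        rw [Polynomial.aeval_def, Polynomial.eval₂_eq_eval_map]
        exact hx
      have hint : IsIntegral F x := Algebra.IsIntegral.isIntegral x
      have hax : ∀ k, Polynomial.aeval x (a k) = 0 := by
        have hli := (rank_eq_card_iff_li (Q.map fun p => Polynomial.aeval x p)).mp (hrk x)
        set w : Fin m → AlgebraicClosure F := fun k => Polynomial.aeval x (a k) with hw
        have hsum : ∑ k, w k • (Q.map fun p => Polynomial.aeval x p) k = 0 := by
          funext j
          simp only [Finset.sum_apply, Pi.smul_apply, Matrix.map_apply, smul_eq_mul,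
            Pi.zero_apply]
          have : Polynomial.aeval x (∑ k, a k * Q k j) = 0 := by
            rw [← hid j, _root_.map_mul, hDx, zero_mul]
          rw [map_sum] at this
          simpa using this
        exact Fintype.linearIndependent_iff.mp hli w hsum
      have hπ0 : minpoly F x ≠ 0 := minpoly.ne_zero hint
      have hπdeg : 0 < (minpoly F x).natDegree := minpoly.natDegree_pos hint
      obtain ⟨D', rfl⟩ := minpoly.dvd F x hDx
      have hπa : ∀ k, minpoly F x ∣ a k := fun k => minpoly.dvd F x (hax k)
      choose a' ha' using hπa
      have hD'0 : D' ≠ 0 := fun h => hD0 (by rw [h, mul_zero])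
      have hdeg' : D'.natDegree ≤ N := by
        have h2 : (minpoly F x).natDegree + D'.natDegree ≤ N + 1 := by
          rw [← Polynomial.natDegree_mul hπ0 hD'0]
          exact hdeg
        omega
      refine ih D' a' hD'0 hdeg' fun j => ?_
      apply mul_left_cancel₀ hπ0
      calc minpoly F x * (D' * v j) = (minpoly F x * D') * v j := by ring
        _ = ∑ k, a k * Q k j := hid j
        _ = minpoly F x * ∑ k, a' k * Q k j := by
          rw [Finset.mul_sum]
          exact Finset.sum_congr rfl fun k _ => by rw [ha' k]; ring

/-- Sufficiency: full rank everywhere plus row-reducedness implies minimality. -/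
lemma isMinimalBasis_of_fullRank {Q : Matrix (Fin m) (Fin n) (Polynomial F)}
    (hrk : ∀ x : AlgebraicClosure F, (Q.map fun p => Polynomial.aeval x p).rank = m)
    (hQh : LinearIndependent F (fun k => (fun j => (Q k j).coeff (rowDegree (Q k))))) :
    IsMinimalBasis Q := by
  classical
  refine ⟨li_ratRow_of_Qh hQh, ?_⟩
  intro m' R hR hspan
  have hm : m' = m := by
    have h1 : m' = Module.finrank (RatFunc F) (rowSpan R) := by
      have := linearIndependent_iff_card_eq_finrank_span.mp hR
      rwa [Fintype.card_fin] at this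
    have h2 : m = Module.finrank (RatFunc F) (rowSpan Q) := by
      have := linearIndependent_iff_card_eq_finrank_span.mp (li_ratRow_of_Qh hQh)
      rwa [Fintype.card_fin] at this
    rw [h1, h2, hspan]
  subst hm
  have hmem : ∀ i, ratRow (R i) ∈ rowSpan Q := fun i =>
    hspan ▸ Submodule.subset_span ⟨i, rfl⟩
  choose A hA using fun i => mem_rowSpan_poly hrk (R i) (hmem i)
  have hdet : (Matrix.of A).det ≠ 0 := by
    intro hdet0
    have hmapdet : ((algebraMap (Polynomial F) (RatFunc F)).mapMatrix (Matrix.of A)).det = 0 := by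
      rw [← RingHom.map_det, hdet0, map_zero]
    obtain ⟨c, hc0, hcmul⟩ := Matrix.exists_vecMul_eq_zero_iff.mpr hmapdet
    have hzero : ∑ i, c i • ratRow (R i) = 0 := by
      funext j
      simp only [Pi.zero_apply]
      rw [sum_smul_ratRow_apply R c j]
      calc ∑ i, c i * algebraMap (Polynomial F) (RatFunc F) (R i j)
          = ∑ i, ∑ k, c i * (algebraMap (Polynomial F) (RatFunc F) (A i k)
              * algebraMap (Polynomial F) (RatFunc F) (Q k j)) := by
            refine Finset.sum_congr rfl fun i _ => ?_
            rw [hA i j, map_sum, Finset.mul_sum]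
            exact Finset.sum_congr rfl fun k _ => by rw [_root_.map_mul]
        _ = ∑ k, (∑ i, c i * algebraMap (Polynomial F) (RatFunc F) (A i k))
              * algebraMap (Polynomial F) (RatFunc F) (Q k j) := by
            rw [Finset.sum_comm]
            refine Finset.sum_congr rfl fun k _ => ?_
            rw [Finset.sum_mul]
            exact Finset.sum_congr rfl fun i _ => by ring
        _ = 0 := by
            refine Finset.sum_eq_zero fun k _ => ?_
            have := congrFun hcmul k
            simp only [Matrix.vecMul, dotProduct, RingHom.mapMatrix_apply,
              Matrix.map_apply, Matrix.of_apply, Pi.zero_apply] at this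
            rw [this, zero_mul]
    obtain ⟨i, hi⟩ := Function.ne_iff.mp hc0
    exact hi (Fintype.linearIndependent_iff.mp hR c hzero i)
  obtain ⟨σ, hσ⟩ : ∃ σ : Equiv.Perm (Fin _), ∀ i, A i (σ i) ≠ 0 := by
    by_contra hσ
    push_neg at hσ
    apply hdet
    rw [Matrix.det_apply]
    refine Finset.sum_eq_zero fun σ _ => ?_
    obtain ⟨i, hi⟩ := hσ σ⁻¹
    have h0 : (Matrix.of A) (σ (σ⁻¹ i)) (σ⁻¹ i) = 0 := by
      rw [show σ (σ⁻¹ i) = i from σ.apply_symm_apply i]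
      exact hi
    have hz : (∏ k, (Matrix.of A) (σ k) k) = 0 :=
      Finset.prod_eq_zero (Finset.mem_univ (σ⁻¹ i)) h0
    rw [hz, smul_zero]
  have hrow : ∀ i, rowDegree (Q (σ i)) ≤ rowDegree (R i) := by
    intro i
    have h1 : rowDegree (R i) = rowDegree (fun j => ∑ k, A i k * Q k j) :=
      congrArg rowDegree (funext fun j => hA i j)
    rw [h1]
    have := rowDegree_combination_ge hQh (A i) (σ i) (hσ i)
    omega
  calc polyOrder Q = ∑ i, rowDegree (Q (σ i)) := (Equiv.sum_comp σ _).symm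
    _ ≤ ∑ i, rowDegree (R i) := Finset.sum_le_sum fun i _ => hrow i
    _ = polyOrder R := rfl

/-- Necessity, part 1: a minimal basis is row reduced. -/
lemma Qh_li_of_minimal {Q : Matrix (Fin m) (Fin n) (Polynomial F)}
    (hmin : IsMinimalBasis Q) :
    LinearIndependent F (fun k => (fun j => (Q k j).coeff (rowDegree (Q k)))) := by
  classical
  obtain ⟨hQli, hopt⟩ := hmin
  by_contra hdep
  obtain ⟨c, hc, k0, hk0⟩ := Fintype.not_linearIndependent_iff.mp hdep
  set S := Finset.univ.filter (fun k => c k ≠ 0) with hS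
  obtain ⟨i, hiS, hi⟩ := S.exists_mem_eq_sup
    ⟨k0, Finset.mem_filter.mpr ⟨Finset.mem_univ _, hk0⟩⟩ (fun k => rowDegree (Q k))
  have hci : c i ≠ 0 := (Finset.mem_filter.mp hiS).2
  have hdmax : ∀ k, c k ≠ 0 → rowDegree (Q k) ≤ rowDegree (Q i) := by
    intro k hk
    rw [← hi]
    exact Finset.le_sup (f := fun k => rowDegree (Q k))
      (Finset.mem_filter.mpr ⟨Finset.mem_univ _, hk⟩)
  set e : Fin m → Polynomial F :=
    fun k => C (c k) * X ^ (rowDegree (Q i) - rowDegree (Q k)) with he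
  set r : Fin n → Polynomial F := fun j => ∑ k, e k * Q k j with hr
  have hrj : ∀ j, r j = ∑ k, e k * Q k j := fun j => rfl
  have hrRat : ratRow r
      = ∑ k, (algebraMap (Polynomial F) (RatFunc F) (e k)) • ratRow (Q k) := by
    funext j
    rw [sum_smul_ratRow_apply]
    show algebraMap (Polynomial F) (RatFunc F) (r j) = _
    rw [hrj j, map_sum]
    exact Finset.sum_congr rfl fun k _ => _root_.map_mul _ _ _
  have hei0 : e i ≠ 0 := by
    simp only [he, Nat.sub_self, pow_zero, mul_one, ne_eq, Polynomial.C_eq_zero]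
    exact hci
  have hei : algebraMap (Polynomial F) (RatFunc F) (e i) ≠ 0 :=
    RatFunc.algebraMap_ne_zero hei0
  have hQub : ∀ k (j : Fin n), (Q k j).natDegree ≤ rowDegree (Q k) :=
    fun k j => Finset.le_sup (f := fun j => (Q k j).natDegree) (Finset.mem_univ j)
  have hcoeff : ∀ (j : Fin n) (t : ℕ), rowDegree (Q i) ≤ t → (r j).coeff t = 0 := by
    intro j t ht
    rw [hrj j, finset_sum_coeff]
    have hterm : ∀ k, (e k * Q k j).coeff t
        = c k * ((Q k j * X ^ (rowDegree (Q i) - rowDegree (Q k))).coeff t) := by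
      intro k
      have hek : e k * Q k j
          = C (c k) * (Q k j * X ^ (rowDegree (Q i) - rowDegree (Q k))) := by
        simp only [he]; ring
      rw [hek, Polynomial.coeff_C_mul]
    rw [Finset.sum_congr rfl (fun k _ => hterm k)]
    rcases eq_or_lt_of_le ht with heq | hlt
    · have hstep : ∀ k, c k * ((Q k j * X ^ (rowDegree (Q i) - rowDegree (Q k))).coeff t)
          = c k * (Q k j).coeff (rowDegree (Q k)) := by
        intro k
        by_cases hck : c k = 0
        · rw [hck, zero_mul, zero_mul]
        · have hk := hdmax k hck
          rw [Polynomial.coeff_mul_X_pow', if_pos (by omega)]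
          congr 2
          omega
      rw [Finset.sum_congr rfl (fun k _ => hstep k)]
      have := congrFun hc j
      simpa [Finset.sum_apply] using this
    · refine Finset.sum_eq_zero fun k _ => ?_
      by_cases hck : c k = 0
      · rw [hck, zero_mul]
      · have hk := hdmax k hck
        have hQk := hQub k j
        rw [Polynomial.coeff_mul_X_pow', if_pos (by omega),
          Polynomial.coeff_eq_zero_of_natDegree_lt (by omega), mul_zero]
  by_cases hr0 : r = 0
  · have hz : ∑ k, (algebraMap (Polynomial F) (RatFunc F) (e k)) • ratRow (Q k) = 0 := by
      rw [← hrRat, hr0]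
      funext j
      simp [ratRow]
    exact hei (Fintype.linearIndependent_iff.mp hQli _ hz i)
  · have hd1 : 1 ≤ rowDegree (Q i) := by
      by_contra hd
      apply hr0
      funext j
      exact Polynomial.ext fun t => by
        simp [hcoeff j t (by omega)]
    have hdeg : rowDegree r < rowDegree (Q i) := by
      have hub : ∀ j, (r j).natDegree ≤ rowDegree (Q i) - 1 := by
        intro j
        by_cases h : r j = 0
        · rw [h, Polynomial.natDegree_zero]; omega
        · have h1 : (r j).degree < ((rowDegree (Q i) : ℕ) : WithBot ℕ) :=
            (Polynomial.degree_lt_iff_coeff_zero _ _).mpr fun t ht =>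
              hcoeff j t (by exact_mod_cast ht)
          have h2 := (Polynomial.natDegree_lt_iff_degree_lt h).mpr h1
          omega
      have : rowDegree r ≤ rowDegree (Q i) - 1 := Finset.sup_le fun j _ => hub j
      omega
    exact order_reduction hQli hopt i r _ hei hrRat hdeg

lemma natDegree_le_rowDegree (v : Fin n → Polynomial F) (j : Fin n) :
    (v j).natDegree ≤ rowDegree v :=
  Finset.le_sup (f := fun j => (v j).natDegree) (Finset.mem_univ j)

/-- Necessity, part 2: a minimal basis has full row rank at every point of the
algebraic closure. -/
lemma rank_of_minimal {Q : Matrix (Fin m) (Fin n) (Polynomial F)}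
    (hmin : IsMinimalBasis Q) (x : AlgebraicClosure F) :
    (Q.map fun p => Polynomial.aeval x p).rank = m := by
  classical
  obtain ⟨hQli, hopt⟩ := hmin
  rw [rank_eq_card_iff_li]
  by_contra hdep
  obtain ⟨w, hwsum, iw, hiw⟩ := Fintype.not_linearIndependent_iff.mp hdep
  -- every m×m minor of Q vanishes at x
  have hminor : ∀ g : Fin m → Fin n, Polynomial.aeval x (Q.submatrix id g).det = 0 := by
    intro g
    have h1 : ((Q.map fun p => Polynomial.aeval x p).submatrix id g).det = 0 := by
      rw [← Matrix.exists_vecMul_eq_zero_iff]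
      refine ⟨w, fun h => hiw (congrFun h iw), ?_⟩
      funext j'
      simp only [Matrix.vecMul, dotProduct, Matrix.submatrix_apply, id_eq]
      have := congrFun hwsum (g j')
      simpa [Finset.sum_apply, Matrix.map_apply] using this
    rw [Matrix.submatrix_map] at h1
    rw [show Polynomial.aeval x (Q.submatrix id g).det
        = ((Q.submatrix id g).map fun p => Polynomial.aeval x p).det from
      RingHom.map_det (Polynomial.aeval x).toRingHom (Q.submatrix id g)]
    exact h1
  have hint : IsIntegral F x := Algebra.IsIntegral.isIntegral x
  have hmonic : (minpoly F x).Monic := minpoly.monic hint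
  have hπ0 : minpoly F x ≠ 0 := minpoly.ne_zero hint
  have hπpos : 0 < (minpoly F x).natDegree := minpoly.natDegree_pos hint
  haveI : Fact (Irreducible (minpoly F x)) := ⟨minpoly.irreducible hint⟩
  -- the reduction of Q mod the minimal polynomial has dependent rows
  have hbar_dep : ¬ LinearIndependent (AdjoinRoot (minpoly F x))
      (fun k => (Q.map (AdjoinRoot.mk (minpoly F x))) k) := by
    intro hli
    obtain ⟨g, hg⟩ := exists_submatrix_det_ne_zero hli
    apply hg
    rw [Matrix.submatrix_map]
    rw [show ((Q.submatrix id g).map ⇑(AdjoinRoot.mk (minpoly F x))).det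
        = AdjoinRoot.mk (minpoly F x) (Q.submatrix id g).det from
      (RingHom.map_det (AdjoinRoot.mk (minpoly F x)) (Q.submatrix id g)).symm]
    exact AdjoinRoot.mk_eq_zero.mpr (minpoly.dvd F x (hminor g))
  obtain ⟨wbar, hwsumK, k1, hk1⟩ := Fintype.not_linearIndependent_iff.mp hbar_dep
  -- lift the dependency to polynomials of degree < deg π
  choose u hu using fun k => AdjoinRoot.mk_surjective (wbar k)
  set c : Fin m → Polynomial F := fun k => u k %ₘ (minpoly F x) with hcdef
  have hmkc : ∀ k, AdjoinRoot.mk (minpoly F x) (c k) = wbar k := by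
    intro k
    rw [← hu k]
    simp only [hcdef]
    rw [Polynomial.modByMonic_eq_sub_mul_div _ _, map_sub, _root_.map_mul,
      AdjoinRoot.mk_self, zero_mul, sub_zero]
  have hcdeg : ∀ k, c k ≠ 0 → (c k).natDegree < (minpoly F x).natDegree := by
    intro k hk
    have h1 := Polynomial.degree_modByMonic_lt (u k) hmonic
    have h2 := (Polynomial.natDegree_lt_iff_degree_lt hk).mpr
      (lt_of_lt_of_le h1 (Polynomial.degree_le_natDegree))
    exact h2
  have hck1 : c k1 ≠ 0 := fun h => hk1 (by rw [← hmkc k1, h, map_zero])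
  have hdvd : ∀ j, minpoly F x ∣ ∑ k, c k * Q k j := by
    intro j
    rw [← AdjoinRoot.mk_eq_zero, map_sum]
    have h2 := congrFun hwsumK j
    simp only [Finset.sum_apply, Pi.smul_apply, smul_eq_mul, Pi.zero_apply,
      Matrix.map_apply] at h2
    rw [← h2]
    exact Finset.sum_congr rfl fun k _ => by rw [_root_.map_mul, hmkc k]
  -- pick the row of largest degree among those with c k ≠ 0
  set S := Finset.univ.filter (fun k => c k ≠ 0) with hS
  obtain ⟨i, hiS, hi⟩ := S.exists_mem_eq_sup
    ⟨k1, Finset.mem_filter.mpr ⟨Finset.mem_univ _, hck1⟩⟩ (fun k => rowDegree (Q k))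
  have hci : c i ≠ 0 := (Finset.mem_filter.mp hiS).2
  have hdmax : ∀ k, c k ≠ 0 → rowDegree (Q k) ≤ rowDegree (Q i) := by
    intro k hk
    rw [← hi]
    exact Finset.le_sup (f := fun k => rowDegree (Q k))
      (Finset.mem_filter.mpr ⟨Finset.mem_univ _, hk⟩)
  set s : Fin n → Polynomial F := fun j => ∑ k, c k * Q k j with hsdef
  have hsj : ∀ j, s j = ∑ k, c k * Q k j := fun j => rfl
  have hsRat : ratRow s
      = ∑ k, (algebraMap (Polynomial F) (RatFunc F) (c k)) • ratRow (Q k) := by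
    funext j
    rw [sum_smul_ratRow_apply]
    show algebraMap (Polynomial F) (RatFunc F) (s j) = _
    rw [hsj j, map_sum]
    exact Finset.sum_congr rfl fun k _ => _root_.map_mul _ _ _
  have hcimap : algebraMap (Polynomial F) (RatFunc F) (c i) ≠ 0 :=
    RatFunc.algebraMap_ne_zero hci
  by_cases hs0 : s = 0
  · have hz : ∑ k, (algebraMap (Polynomial F) (RatFunc F) (c k)) • ratRow (Q k) = 0 := by
      rw [← hsRat, hs0]
      funext j
      simp [ratRow]
    exact hcimap (Fintype.linearIndependent_iff.mp hQli _ hz i)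
  have hsdeg : ∀ j, (s j).natDegree
      ≤ ((minpoly F x).natDegree - 1) + rowDegree (Q i) := by
    intro j
    rw [hsj j]
    refine Polynomial.natDegree_sum_le_of_forall_le _ _ fun k _ => ?_
    by_cases hck : c k = 0
    · simp [hck]
    · calc (c k * Q k j).natDegree ≤ (c k).natDegree + (Q k j).natDegree :=
          Polynomial.natDegree_mul_le
        _ ≤ ((minpoly F x).natDegree - 1) + rowDegree (Q i) := by
          have h1 := hcdeg k hck
          have h2 := natDegree_le_rowDegree (Q k) j
          have h3 := hdmax k hck
          omega
  obtain ⟨j0, hj0⟩ : ∃ j, s j ≠ 0 := by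
    by_contra hall
    push_neg at hall
    exact hs0 (funext hall)
  have hd1 : 1 ≤ rowDegree (Q i) := by
    by_contra hd
    have h1 := Polynomial.natDegree_le_of_dvd (hdvd j0) hj0
    have h2 := hsdeg j0
    rw [← hsj j0] at h1
    omega
  -- divide out the minimal polynomial
  set r : Fin n → Polynomial F := fun j => s j /ₘ minpoly F x with hrdef
  have hfac : ∀ j, s j = minpoly F x * r j := by
    intro j
    have hmod : s j %ₘ minpoly F x = 0 :=
      (Polynomial.modByMonic_eq_zero_iff_dvd hmonic).mpr (by rw [hsj j]; exact hdvd j)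
    have h1 := Polynomial.modByMonic_add_div (s j) (minpoly F x)
    rw [hmod, zero_add] at h1
    exact h1.symm
  have hrdeg : ∀ j, (r j).natDegree ≤ rowDegree (Q i) - 1 := by
    intro j
    by_cases h : r j = 0
    · rw [h, Polynomial.natDegree_zero]
      omega
    · have h1 : (s j).natDegree = (minpoly F x).natDegree + (r j).natDegree := by
        rw [hfac j]
        exact Polynomial.natDegree_mul hπ0 h
      have h2 := hsdeg j
      omega
  have hπmap : algebraMap (Polynomial F) (RatFunc F) (minpoly F x) ≠ 0 :=
    RatFunc.algebraMap_ne_zero hπ0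
  have hrRat : ratRow r = ∑ k, ((algebraMap (Polynomial F) (RatFunc F) (c k))
      / algebraMap (Polynomial F) (RatFunc F) (minpoly F x)) • ratRow (Q k) := by
    funext j
    rw [sum_smul_ratRow_apply]
    show algebraMap (Polynomial F) (RatFunc F) (r j) = _
    rw [eq_comm]
    calc ∑ k, (algebraMap (Polynomial F) (RatFunc F) (c k)
            / algebraMap (Polynomial F) (RatFunc F) (minpoly F x))
            * algebraMap (Polynomial F) (RatFunc F) (Q k j)
        = (∑ k, algebraMap (Polynomial F) (RatFunc F) (c k)
            * algebraMap (Polynomial F) (RatFunc F) (Q k j))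
            / algebraMap (Polynomial F) (RatFunc F) (minpoly F x) := by
          rw [Finset.sum_div]
          exact Finset.sum_congr rfl fun k _ => by ring
      _ = algebraMap (Polynomial F) (RatFunc F) (s j)
            / algebraMap (Polynomial F) (RatFunc F) (minpoly F x) := by
          rw [hsj j, map_sum]
          congr 1
          exact Finset.sum_congr rfl fun k _ => (_root_.map_mul _ _ _).symm
      _ = algebraMap (Polynomial F) (RatFunc F) (r j) := by
          rw [hfac j, _root_.map_mul]
          exact mul_div_cancel_left₀ _ hπmap
  have hei : (algebraMap (Polynomial F) (RatFunc F) (c i))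
      / algebraMap (Polynomial F) (RatFunc F) (minpoly F x) ≠ 0 :=
    div_ne_zero hcimap hπmap
  have hdeg : rowDegree r < rowDegree (Q i) := by
    have h1 : rowDegree r ≤ rowDegree (Q i) - 1 := Finset.sup_le fun j _ => hrdeg j
    omega
  exact order_reduction hQli hopt i r _ hei hrRat hdeg

end Helpers

/-- Theorem 2.2: `Q(λ)` is a minimal basis if and only if `Q(λ₀)` has full row rank for
every `λ₀` in the algebraic closure of `F` and the highest row degree coefficient matrix
of `Q(λ)` has full row rank. -/
theorem isMinimalBasis_iff_fullRank (F : Type*) [Field F] (m n : ℕ)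
    (Q : Matrix (Fin m) (Fin n) (Polynomial F)) :
    IsMinimalBasis Q ↔
      ((∀ x : AlgebraicClosure F, (Q.map fun p => Polynomial.aeval x p).rank = m) ∧
        (Matrix.of fun i j => (Q i j).coeff (rowDegree (Q i)) :
          Matrix (Fin m) (Fin n) F).rank = m) := by
  constructor
  · intro hmin
    refine ⟨fun x => rank_of_minimal hmin x, ?_⟩
    rw [rank_eq_card_iff_li]
    exact Qh_li_of_minimal hmin
  · rintro ⟨hrk, hQh⟩
    exact isMinimalBasis_of_fullRank hrk ((rank_eq_card_iff_li _).mp hQh)
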